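/- Let E be a real inner product space, n ≥ 1, and let Z₁, …, Z_n ⊆ E and p₁, …, p_n ∈ E. (a) If there exist weights w₁, …, w_n ∈ ℝ such that Zᵢ = {t ∈ E : ‖pᵢ − t‖² − wᵢ ≤ ‖pⱼ − t‖² − wⱼ for all j} for every i, then weak monotonicity holds: for all i, j and all t ∈ Zᵢ, t' ∈ Zⱼ, ⟨pᵢ, t' − t⟩ ≤ ⟨pⱼ, t' − t⟩. (b) Conversely, if weak monotonicity holds, then: (orthogonality) for all i, j and all t, t' ∈ Zᵢ ∩ Zⱼ, ⟨pᵢ − pⱼ, t' − t⟩ = 0; and (orientation) for all i, j with pᵢ ≠ pⱼ, all c ∈ ℝ, and all t ∈ Zᵢ, if t + c·(pⱼ − pᵢ) ∈ Zⱼ then c ≥ 0. -/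

import Mathlib

open scoped RealInnerProductSpace

/-- (a) Power diagram cells satisfy weak monotonicity; (b) conversely, weak
monotonicity implies Aurenhammer's orthogonality and orientation conditions. -/
theorem power_diagram_wmon {E : Type*} [NormedAddCommGroup E] [InnerProductSpace ℝ E]
    (n : ℕ) (hn : 1 ≤ n) (Z : Fin n → Set E) (p : Fin n → E) :
    ((∃ w : Fin n → ℝ, ∀ i : Fin n,
        Z i = {t : E | ∀ j : Fin n, ‖p i - t‖ ^ 2 - w i ≤ ‖p j - t‖ ^ 2 - w j}) →
      ∀ i j : Fin n, ∀ t ∈ Z i, ∀ t' ∈ Z j, ⟪p i, t' - t⟫ ≤ ⟪p j, t' - t⟫) ∧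
    ((∀ i j : Fin n, ∀ t ∈ Z i, ∀ t' ∈ Z j, ⟪p i, t' - t⟫ ≤ ⟪p j, t' - t⟫) →
      ((∀ i j : Fin n, ∀ t ∈ Z i ∩ Z j, ∀ t' ∈ Z i ∩ Z j, ⟪p i - p j, t' - t⟫ = (0:ℝ)) ∧
        (∀ i j : Fin n, p i ≠ p j → ∀ c : ℝ, ∀ t ∈ Z i,
          t + c • (p j - p i) ∈ Z j → 0 ≤ c))) := by
  constructor
  · rintro ⟨w, hw⟩ i j t ht t' ht'
    rw [hw i] at ht
    rw [hw j] at ht'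
    have h1 := ht j
    have h2 := ht' i
    have key : ‖p i - t‖ ^ 2 + ‖p j - t'‖ ^ 2 ≤ ‖p j - t‖ ^ 2 + ‖p i - t'‖ ^ 2 := by
      linarith
    have expand : ∀ a b : E, ‖a - b‖ ^ 2 = ‖a‖ ^ 2 - 2 * ⟪a, b⟫ + ‖b‖ ^ 2 := by
      intro a b
      rw [← real_inner_self_eq_norm_sq, ← real_inner_self_eq_norm_sq,
        ← real_inner_self_eq_norm_sq]
      simp [inner_sub_left, inner_sub_right, real_inner_comm]
      linarith [norm_sub_sq_real a b]
    rw [expand, expand, expand, expand] at key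
    rw [inner_sub_right, inner_sub_right]
    linarith
  · intro hwmon
    constructor
    · intro i j t ht t' ht'
      have h1 := hwmon i j t ht.1 t' ht'.2
      have h2 := hwmon j i t ht.2 t' ht'.1
      rw [inner_sub_left]
      linarith
    · intro i j hp c t ht hmem
      have h := hwmon i j t ht _ hmem
      rw [show t + c • (p j - p i) - t = c • (p j - p i) by abel, inner_smul_right, inner_smul_right] at h
      have hpos : (0:ℝ) < ‖p j - p i‖ ^ 2 := by
        have h0 : (0:ℝ) < ‖p j - p i‖ :=
          norm_pos_iff.mpr (sub_ne_zero.mpr hp.symm)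
        positivity
      have hinner : ⟪p i, p j - p i⟫ - ⟪p j, p j - p i⟫ = -‖p j - p i‖ ^ 2 := by
        rw [← real_inner_self_eq_norm_sq]
        simp only [inner_sub_left, inner_sub_right, real_inner_comm (p j) (p i)]
        ring
      nlinarith [h, hinner, hpos]
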